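/- Let G be a Lie group with Lie algebra 𝔤, and let a : ℝ → G, y : ℝ → 𝔤* be differentiable curves satisfying the kinematic equation (a⁻¹ȧ)(t) = (∇H)(y(t)) for a smooth H : 𝔤* → ℝ. Then y satisfies the Euler–Arnold equation ẏ = ad*_{∇H(y)} y if and only if t ↦ (Ad a(t)⁻¹)* y(t) is constant. -/

import Mathlib

attribute [local instance] Matrix.normedAddCommGroup Matrix.normedSpace


section aux
variable {d : ℕ}

local notation "M" => Matrix (Fin d) (Fin d) ℝ

noncomputable def mulL : M →L[ℝ] M →L[ℝ] M :=
  LinearMap.toContinuousLinearMap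
    ((LinearMap.toContinuousLinearMap.toLinearMap).comp (LinearMap.mul ℝ M))

@[simp] lemma mulL_apply (A B : M) : mulL A B = A * B := rfl

lemma HasDerivAt.mmul {u v : ℝ → M} {u' v' : M} {t : ℝ}
    (hu : HasDerivAt u u' t) (hv : HasDerivAt v v' t) :
    HasDerivAt (fun s => u s * v s) (u' * v t + u t * v') t := by
  have hu' := hasDerivAt_pi.1 hu
  have hv' := hasDerivAt_pi.1 hv
  refine hasDerivAt_pi.2 fun i => hasDerivAt_pi.2 fun j => ?_
  simp only [Matrix.mul_apply, Matrix.add_apply, ← Finset.sum_add_distrib]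
  apply HasDerivAt.fun_sum
  intro k _
  exact ((hasDerivAt_pi.1 (hu' i)) k).mul ((hasDerivAt_pi.1 (hv' k)) j)

lemma diff_entry {f : ℝ → M} (hf : Differentiable ℝ f) (i j : Fin d) :
    Differentiable ℝ fun s => f s i j := by
  have : Differentiable ℝ fun A : M => A i j :=
    ((Matrix.entryLinearMap ℝ ℝ i j).toContinuousLinearMap).differentiable
  exact this.comp hf

lemma diff_det {g : ℝ → M} (hg : ∀ i j, Differentiable ℝ fun s => g s i j) :
    Differentiable ℝ fun s => (g s).det := by
  simp only [Matrix.det_apply']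
  exact Differentiable.fun_sum fun σ _ =>
    (Differentiable.fun_finset_prod (fun i _ => hg (σ i) i)).const_mul _

end aux

section aux2
variable {d : ℕ}
local notation "M" => Matrix (Fin d) (Fin d) ℝ

lemma diff_matrix {g : ℝ → M} (hg : ∀ i j, Differentiable ℝ fun s => g s i j) :
    Differentiable ℝ g := by
  have h : ∀ s, g s = ∑ i, ∑ j, g s i j • Matrix.single i j (1:ℝ) := by
    intro s
    simpa [Matrix.smul_single, smul_eq_mul, mul_one]
      using Matrix.matrix_eq_sum_single (g s)
  rw [funext h]
  exact Differentiable.fun_sum fun i _ => Differentiable.fun_sum fun j _ =>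
    (hg i j).smul_const _

lemma diff_inv {a : ℝ → M} (hd : Differentiable ℝ a) (ha : ∀ t, IsUnit (a t)) :
    Differentiable ℝ fun t => (a t)⁻¹ := by
  have hdet : ∀ t, IsUnit (a t).det := fun t => (Matrix.isUnit_iff_isUnit_det _).mp (ha t)
  have hdetd : Differentiable ℝ fun t => (a t).det := diff_det (diff_entry hd)
  have hadj : Differentiable ℝ fun t => (a t).adjugate := by
    apply diff_matrix; intro i j
    simp only [Matrix.adjugate_apply]
    apply diff_det; intro k l
    simp only [Matrix.updateRow_apply]
    by_cases hk : k = j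
    · simp only [hk, if_pos rfl]; exact differentiable_const _
    · simp only [if_neg hk]; exact diff_entry hd k l
  have heq : (fun t => (a t)⁻¹) = fun t => ((a t).det)⁻¹ • (a t).adjugate := by
    funext t; rw [Matrix.inv_def, Ring.inverse_eq_inv']
  rw [heq]
  exact (hdetd.inv fun t => (hdet t).ne_zero).smul hadj

end aux2

set_option maxHeartbeats 4000000 in
/-- For a (matrix) Lie group, given the kinematic equation a⁻¹ȧ = ∇H(y(t)), the curve y
satisfies the Euler–Arnold equation ẏ = ad*_{∇H(y)} y (i.e. ẏ(m) = y(⁅∇H(y), m⁆))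
if and only if the moment map t ↦ (Ad a(t)⁻¹)* y(t), i.e. m ↦ y(t)(a(t)⁻¹ m a(t)),
is constant. -/
theorem euler_arnold_iff_moment_map_constant {d : ℕ}
    (H : (Matrix (Fin d) (Fin d) ℝ →L[ℝ] ℝ) → ℝ)
    (gradH : (Matrix (Fin d) (Fin d) ℝ →L[ℝ] ℝ) → Matrix (Fin d) (Fin d) ℝ)
    (hgrad : ∀ y ξ, ξ (gradH y) = fderiv ℝ H y ξ)
    (a : ℝ → Matrix (Fin d) (Fin d) ℝ)
    (y : ℝ → (Matrix (Fin d) (Fin d) ℝ →L[ℝ] ℝ))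
    (ha : ∀ t, IsUnit (a t))
    (hy : Differentiable ℝ y)
    (hkin : ∀ t, HasDerivAt a (a t * gradH (y t)) t) :
    (∀ (t : ℝ) (m : Matrix (Fin d) (Fin d) ℝ),
      HasDerivAt (fun s => y s m)
        (y t (gradH (y t) * m - m * gradH (y t))) t)
    ↔ (∀ (s t : ℝ) (m : Matrix (Fin d) (Fin d) ℝ),
        y s ((a s)⁻¹ * m * a s) = y t ((a t)⁻¹ * m * a t)) := by
  classical
  have had : Differentiable ℝ a := fun t => (hkin t).differentiableAt
  have hb : Differentiable ℝ (fun t => (a t)⁻¹) := diff_inv had ha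
  have hdet : ∀ t, IsUnit (a t).det := fun t => (Matrix.isUnit_iff_isUnit_det _).mp (ha t)
  have hab : ∀ t, a t * (a t)⁻¹ = 1 := fun t => Matrix.mul_nonsing_inv _ (hdet t)
  have hba : ∀ t, (a t)⁻¹ * a t = 1 := fun t => Matrix.nonsing_inv_mul _ (hdet t)
  have hb' : ∀ t, HasDerivAt (fun s => (a s)⁻¹) (-(gradH (y t) * (a t)⁻¹)) t := by
    intro t
    have hbt : HasDerivAt (fun s => (a s)⁻¹) (deriv (fun s => (a s)⁻¹) t) t :=
      (hb t).hasDerivAt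
    set B := deriv (fun s => (a s)⁻¹) t with hB
    have h1 : HasDerivAt (fun s => a s * (a s)⁻¹)
        ((a t * gradH (y t)) * (a t)⁻¹ + a t * B) t := (hkin t).mmul hbt
    have h2 : HasDerivAt (fun s => a s * (a s)⁻¹) 0 t := by
      have he : (fun s => a s * (a s)⁻¹) = fun _ => (1 : Matrix (Fin d) (Fin d) ℝ) :=
        funext hab
      rw [he]; exact hasDerivAt_const t 1
    have h3 : (a t * gradH (y t)) * (a t)⁻¹ + a t * B = 0 := h1.unique h2
    have h5 : a t * B = -((a t * gradH (y t)) * (a t)⁻¹) :=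
      eq_neg_of_add_eq_zero_right h3
    have h4 : B = -(gradH (y t) * (a t)⁻¹) := by
      calc B = ((a t)⁻¹ * a t) * B := by rw [hba, one_mul]
        _ = (a t)⁻¹ * (a t * B) := by rw [mul_assoc]
        _ = (a t)⁻¹ * -((a t * gradH (y t)) * (a t)⁻¹) := by rw [h5]
        _ = -(gradH (y t) * (a t)⁻¹) := by
            rw [mul_neg]
            congr 1
            have : (a t)⁻¹ * (a t * gradH (y t) * (a t)⁻¹)
                = ((a t)⁻¹ * a t) * (gradH (y t) * (a t)⁻¹) := by noncomm_ring
            rw [this, hba, one_mul]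
    rw [← h4]; exact hbt
  have hc : ∀ (t : ℝ) (m : Matrix (Fin d) (Fin d) ℝ),
      HasDerivAt (fun s => (a s)⁻¹ * m * a s)
        (((a t)⁻¹ * m * a t) * gradH (y t) - gradH (y t) * ((a t)⁻¹ * m * a t)) t := by
    intro t m
    have h1 := ((hb' t).mmul (hasDerivAt_const t m)).mmul (hkin t)
    convert h1 using 1
    noncomm_ring
  have hyap : ∀ (t : ℝ) (m : Matrix (Fin d) (Fin d) ℝ),
      HasDerivAt (fun s => y s m) (deriv y t m) t := by
    intro t m
    exact (ContinuousLinearMap.apply ℝ ℝ m).hasFDerivAt.comp_hasDerivAt t (hy t).hasDerivAt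
  constructor
  · intro hEA s t m
    have hDeq : ∀ (u : ℝ) (n : Matrix (Fin d) (Fin d) ℝ),
        deriv y u n = y u (gradH (y u) * n - n * gradH (y u)) :=
      fun u n => (hyap u n).unique (hEA u n)
    have hF : ∀ (u : ℝ), HasDerivAt (fun s => y s ((a s)⁻¹ * m * a s)) 0 u := by
      intro u
      have h1 : HasDerivAt (fun s => y s ((a s)⁻¹ * m * a s)) (deriv y u ((a u)⁻¹ * m * a u)
          + y u (((a u)⁻¹ * m * a u) * gradH (y u) - gradH (y u) * ((a u)⁻¹ * m * a u))) u :=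
        ((hy u).hasDerivAt).clm_apply (hc u m)
      rw [hDeq] at h1
      have hz : y u (gradH (y u) * ((a u)⁻¹ * m * a u) - ((a u)⁻¹ * m * a u) * gradH (y u))
          + y u (((a u)⁻¹ * m * a u) * gradH (y u) - gradH (y u) * ((a u)⁻¹ * m * a u))
          = 0 := by
        rw [← map_add]
        have : (gradH (y u) * ((a u)⁻¹ * m * a u) - ((a u)⁻¹ * m * a u) * gradH (y u))
            + (((a u)⁻¹ * m * a u) * gradH (y u) - gradH (y u) * ((a u)⁻¹ * m * a u)) = 0 := by
          abel
        rw [this, map_zero]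
      rw [hz] at h1
      exact h1
    have hdiff : Differentiable ℝ (fun s => y s ((a s)⁻¹ * m * a s)) :=
      fun u => (hF u).differentiableAt
    exact is_const_of_deriv_eq_zero hdiff (fun u => (hF u).deriv) s t
  · intro hconst t m
    set n := a t * m * (a t)⁻¹ with hn
    have hcn : (a t)⁻¹ * n * a t = m := by
      have h1 : (a t)⁻¹ * (a t * m * (a t)⁻¹) * a t
          = ((a t)⁻¹ * a t) * m * ((a t)⁻¹ * a t) := by noncomm_ring
      rw [hn, h1, hba, one_mul, mul_one]
    have hFconst : (fun s => y s ((a s)⁻¹ * n * a s))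
        = fun _ => y t ((a t)⁻¹ * n * a t) := funext fun s => hconst s t n
    have h0 : HasDerivAt (fun s => y s ((a s)⁻¹ * n * a s)) 0 t := by
      rw [hFconst]; exact hasDerivAt_const _ _
    have h1 : HasDerivAt (fun s => y s ((a s)⁻¹ * n * a s)) (deriv y t ((a t)⁻¹ * n * a t)
        + y t (((a t)⁻¹ * n * a t) * gradH (y t) - gradH (y t) * ((a t)⁻¹ * n * a t))) t :=
      ((hy t).hasDerivAt).clm_apply (hc t n)
    rw [hcn] at h1
    have h2 : deriv y t m + y t (m * gradH (y t) - gradH (y t) * m) = 0 :=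
      h1.unique h0
    have h4 : deriv y t m = -(y t (m * gradH (y t) - gradH (y t) * m)) :=
      eq_neg_of_add_eq_zero_left h2
    have h3 : deriv y t m = y t (gradH (y t) * m - m * gradH (y t)) := by
      rw [h4, ← map_neg, neg_sub]
    rw [← h3]; exact hyap t m
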